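/- Let G be a graph of order n, let H be a graph with a distinguished root vertex v, and let G∘̄H be the rooted product (take n disjoint copies of H and identify the root of the i-th copy with the i-th vertex of G). Then the independence polynomials satisfy I(G∘̄H; x) = I(H−v; x)^n · I(G; x·I(H−N[v]; x)/I(H−v; x)), where N[v] is the closed neighborhood of v. -/

import Mathlib

open Polynomial Finset
open scoped Classical

/-- The independence polynomial of a finite simple graph. -/
noncomputable def indepPoly {V : Type*} [Fintype V] (G : SimpleGraph V) : Polynomial ℝ :=
  ∑ s ∈ Finset.univ.filter (fun s : Finset V => ∀ u ∈ s, ∀ v ∈ s, ¬ G.Adj u v),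
    X ^ s.card

/-- The rooted product `G∘̄H` with respect to the root `v` of `H`: take a copy of `H`
for every vertex of `G` and identify the root of each copy with that vertex of `G`. -/
def rootedProd {α β : Type*} (G : SimpleGraph α) (H : SimpleGraph β) (v : β) :
    SimpleGraph (α × β) where
  Adj p q := (p.1 = q.1 ∧ H.Adj p.2 q.2) ∨ (p.2 = v ∧ q.2 = v ∧ G.Adj p.1 q.1)
  symm := by
    constructor
    intro p q h
    rcases h with ⟨h1, h2⟩ | ⟨h1, h2, h3⟩
    · exact Or.inl ⟨h1.symm, h2.symm⟩
    · exact Or.inr ⟨h2, h1, h3.symm⟩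
  loopless := by
    constructor
    intro p h
    rcases h with ⟨_, h2⟩ | ⟨_, _, h3⟩
    · exact H.irrefl h2
    · exact G.irrefl h3

section Aux

variable {α β : Type*} [Fintype α] [Fintype β]

/-- Sum over independent sets of `H` containing `v`. -/
lemma aux_sumP (H : SimpleGraph β) (v : β) :
    (X : Polynomial ℝ) * indepPoly (H.induce {u : β | u ≠ v ∧ ¬ H.Adj v u})
      = ∑ T ∈ Finset.univ.filter (fun T : Finset β =>
        (∀ u ∈ T, ∀ w ∈ T, ¬ H.Adj u w) ∧ v ∈ T), (X : Polynomial ℝ) ^ T.card := by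
  unfold indepPoly
  rw [Finset.mul_sum]
  refine Finset.sum_nbij' (fun t => insert v (t.map (Function.Embedding.subtype _)))
    (fun T => (T.erase v).subtype (fun u => u ∈ {u : β | u ≠ v ∧ ¬ H.Adj v u})) ?_ ?_ ?_ ?_ ?_
  · intro t ht
    simp only [mem_filter, mem_univ, true_and] at ht ⊢
    refine ⟨?_, Finset.mem_insert_self _ _⟩
    intro a ha b hb hadj
    rw [Finset.mem_insert] at ha hb
    rcases ha with rfl | ha <;> rcases hb with rfl | hb
    · exact H.irrefl hadj
    · simp only [Finset.mem_map, Function.Embedding.coe_subtype] at hb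
      obtain ⟨b', _, rfl⟩ := hb
      exact b'.2.2 hadj
    · simp only [Finset.mem_map, Function.Embedding.coe_subtype] at ha
      obtain ⟨a', _, rfl⟩ := ha
      exact a'.2.2 hadj.symm
    · simp only [Finset.mem_map, Function.Embedding.coe_subtype] at ha hb
      obtain ⟨a', ha', rfl⟩ := ha
      obtain ⟨b', hb', rfl⟩ := hb
      exact ht _ ha' _ hb' hadj
  · intro T hT
    simp only [mem_filter, mem_univ, true_and] at hT ⊢
    intro a ha b hb hadj
    rw [Finset.mem_subtype, Finset.mem_erase] at ha hb
    exact hT.1 _ ha.2 _ hb.2 hadj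
  · intro t ht
    ext a
    simp only [Finset.mem_subtype, Finset.mem_erase, Finset.mem_insert, Finset.mem_map,
      Function.Embedding.coe_subtype]
    constructor
    · rintro ⟨hne, (h | ⟨b, hb, hba⟩)⟩
      · exact absurd h hne
      · cases Subtype.ext hba; exact hb
    · intro ha
      exact ⟨a.2.1, Or.inr ⟨a, ha, rfl⟩⟩
  · intro T hT
    simp only [mem_filter, mem_univ, true_and] at hT
    rw [Finset.subtype_map]
    have hfil : (T.erase v).filter (fun u => u ∈ {u : β | u ≠ v ∧ ¬ H.Adj v u}) = T.erase v := by
      rw [Finset.filter_true_of_mem]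
      intro u hu
      rw [Finset.mem_erase] at hu
      exact ⟨hu.1, hT.1 _ hT.2 _ hu.2⟩
    rw [hfil, Finset.insert_erase hT.2]
  · intro t ht
    have hv : v ∉ t.map (Function.Embedding.subtype _) := by
      simp only [Finset.mem_map, Function.Embedding.coe_subtype]
      rintro ⟨a, _, ha⟩
      exact a.2.1 ha
    rw [Finset.card_insert_of_notMem hv, Finset.card_map, pow_succ, mul_comm]

/-- Sum over independent sets of `H` avoiding `v`. -/
lemma aux_sumQ (H : SimpleGraph β) (v : β) :
    ∑ T ∈ Finset.univ.filter (fun T : Finset β =>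
        (∀ u ∈ T, ∀ w ∈ T, ¬ H.Adj u w) ∧ v ∉ T), (X : Polynomial ℝ) ^ T.card
      = indepPoly (H.induce {u : β | u ≠ v}) := by
  unfold indepPoly
  refine Finset.sum_nbij' (fun T => T.subtype (fun u => u ∈ {u : β | u ≠ v}))
    (fun t => t.map (Function.Embedding.subtype _)) ?_ ?_ ?_ ?_ ?_
  · intro T hT
    simp only [mem_filter, mem_univ, true_and] at hT ⊢
    intro a ha b hb hadj
    rw [Finset.mem_subtype] at ha hb
    exact hT.1 _ ha _ hb hadj
  · intro t ht
    simp only [mem_filter, mem_univ, true_and] at ht ⊢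
    constructor
    · intro a ha b hb hadj
      simp only [Finset.mem_map, Function.Embedding.coe_subtype] at ha hb
      obtain ⟨a', ha', rfl⟩ := ha
      obtain ⟨b', hb', rfl⟩ := hb
      exact ht _ ha' _ hb' hadj
    · intro hv
      simp only [Finset.mem_map, Function.Embedding.coe_subtype] at hv
      obtain ⟨a', _, ha'⟩ := hv
      exact a'.2 ha'
  · intro T hT
    simp only [mem_filter, mem_univ, true_and] at hT
    ext u
    simp only [Finset.mem_map, Function.Embedding.coe_subtype, Finset.mem_subtype]
    constructor
    · rintro ⟨a, ha, rfl⟩; exact ha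
    · intro hu
      refine ⟨⟨u, ?_⟩, hu, rfl⟩
      intro h; exact hT.2 (h ▸ hu)
  · intro t ht
    ext a
    simp only [Finset.mem_subtype, Finset.mem_map, Function.Embedding.coe_subtype]
    constructor
    · rintro ⟨b, hb, hba⟩
      cases Subtype.ext hba; exact hb
    · intro ha; exact ⟨a, ha, rfl⟩
  · intro T hT
    simp only [mem_filter, mem_univ, true_and] at hT
    congr 1
    rw [Finset.card_subtype, Finset.filter_true_of_mem]
    intro u hu h
    exact hT.2 (h ▸ hu)

/-- Independent sets of the rooted product correspond to "good" functions `α → Finset β`. -/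
lemma aux_main1 (G : SimpleGraph α) (H : SimpleGraph β) (v : β) :
    indepPoly (rootedProd G H v) =
      ∑ g ∈ (Finset.univ : Finset (α → Finset β)).filter
        (fun g => (∀ a, ∀ u ∈ g a, ∀ w ∈ g a, ¬ H.Adj u w) ∧
          (∀ a a', v ∈ g a → v ∈ g a' → ¬ G.Adj a a')),
        ∏ a, (X : Polynomial ℝ) ^ (g a).card := by
  unfold indepPoly
  refine Finset.sum_nbij' (fun S => fun a => Finset.univ.filter (fun b => (a, b) ∈ S))
    (fun g => Finset.univ.filter (fun p : α × β => p.2 ∈ g p.1)) ?_ ?_ ?_ ?_ ?_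
  · intro S hS
    simp only [mem_filter, mem_univ, true_and] at hS ⊢
    constructor
    · intro a u hu w hw hadj
      exact hS _ hu _ hw (Or.inl ⟨rfl, hadj⟩)
    · intro a a' ha ha' hG
      exact hS _ ha _ ha' (Or.inr ⟨rfl, rfl, hG⟩)
  · intro g hg
    simp only [mem_filter, mem_univ, true_and] at hg ⊢
    intro p hp q hq hadj
    rcases hadj with ⟨h1, h2⟩ | ⟨h1, h2, h3⟩
    · exact hg.1 p.1 _ hp _ (h1 ▸ hq) h2
    · exact hg.2 p.1 q.1 (h1 ▸ hp) (h2 ▸ hq) h3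
  · intro S hS
    ext p
    simp only [mem_filter, mem_univ, true_and]
  · intro g hg
    funext a
    ext b
    simp only [mem_filter, mem_univ, true_and]
  · intro S hS
    have hcard : S.card = ∑ a, (Finset.univ.filter (fun b => (a, b) ∈ S)).card := by
      have : S.card = (Finset.univ.filter (fun p : α × β => p ∈ S)).card := by
        rw [Finset.filter_univ_mem]
      rw [this, Finset.card_filter, Fintype.sum_prod_type]
      exact Finset.sum_congr rfl fun a _ => (Finset.card_filter _ _).symm
    rw [hcard, ← Finset.prod_pow_eq_pow_sum]

lemma aux_fiber_eq (G : SimpleGraph α) (H : SimpleGraph β) (v : β)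
    (s : Finset α) (hs : ∀ a ∈ s, ∀ a' ∈ s, ¬ G.Adj a a') :
    ((Finset.univ : Finset (α → Finset β)).filter
        (fun g => (∀ a, ∀ u ∈ g a, ∀ w ∈ g a, ¬ H.Adj u w) ∧
          (∀ a a', v ∈ g a → v ∈ g a' → ¬ G.Adj a a'))).filter
      (fun g => Finset.univ.filter (fun a => v ∈ g a) = s)
    = Fintype.piFinset (fun a => if a ∈ s then
        Finset.univ.filter (fun T : Finset β => (∀ u ∈ T, ∀ w ∈ T, ¬ H.Adj u w) ∧ v ∈ T)
      else
        Finset.univ.filter (fun T : Finset β => (∀ u ∈ T, ∀ w ∈ T, ¬ H.Adj u w) ∧ v ∉ T)) := by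
  ext g
  simp only [Finset.mem_filter, Finset.mem_univ, true_and, Fintype.mem_piFinset]
  constructor
  · rintro ⟨⟨h1, _⟩, h3⟩
    intro a
    by_cases ha : a ∈ s
    · rw [if_pos ha]
      simp only [Finset.mem_filter, Finset.mem_univ, true_and]
      refine ⟨h1 a, ?_⟩
      have := h3 ▸ ha
      rw [Finset.mem_filter] at this
      exact this.2
    · rw [if_neg ha]
      simp only [Finset.mem_filter, Finset.mem_univ, true_and]
      refine ⟨h1 a, fun hv => ha ?_⟩
      rw [← h3, Finset.mem_filter]
      exact ⟨Finset.mem_univ a, hv⟩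
  · intro h
    have hmem : ∀ a, v ∈ g a ↔ a ∈ s := by
      intro a
      have := h a
      by_cases ha : a ∈ s
      · rw [if_pos ha, Finset.mem_filter] at this
        exact ⟨fun _ => ha, fun _ => this.2.2⟩
      · rw [if_neg ha, Finset.mem_filter] at this
        exact ⟨fun hv => absurd hv this.2.2, fun h' => absurd h' ha⟩
    have hind : ∀ a, ∀ u ∈ g a, ∀ w ∈ g a, ¬ H.Adj u w := by
      intro a
      have := h a
      by_cases ha : a ∈ s
      · rw [if_pos ha, Finset.mem_filter] at this; exact this.2.1
      · rw [if_neg ha, Finset.mem_filter] at this; exact this.2.1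
    refine ⟨⟨hind, ?_⟩, ?_⟩
    · intro a a' hva hva'
      exact hs a ((hmem a).1 hva) a' ((hmem a').1 hva')
    · ext a
      simp only [Finset.mem_filter, Finset.mem_univ, true_and]
      exact hmem a

end Aux

theorem stmt17 {α β : Type*} [Fintype α] [Fintype β]
    (G : SimpleGraph α) (H : SimpleGraph β) (v : β) :
    indepPoly (rootedProd G H v) =
      ∑ k ∈ Finset.range (Fintype.card α + 1),
        C ((indepPoly G).coeff k) * X ^ k *
          (indepPoly (H.induce {u : β | u ≠ v ∧ ¬ H.Adj v u})) ^ k *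
          (indepPoly (H.induce {u : β | u ≠ v})) ^ (Fintype.card α - k) := by
  set P := indepPoly (H.induce {u : β | u ≠ v ∧ ¬ H.Adj v u}) with hP
  set Q := indepPoly (H.induce {u : β | u ≠ v}) with hQ
  set n := Fintype.card α with hn
  set IndS := Finset.univ.filter (fun s : Finset α => ∀ u ∈ s, ∀ w ∈ s, ¬ G.Adj u w) with hIndS
  -- LHS = sum over independent sets s of G of X^|s| P^|s| Q^(n-|s|)
  have hLHS : indepPoly (rootedProd G H v) =
      ∑ s ∈ IndS, (X : Polynomial ℝ) ^ s.card * P ^ s.card * Q ^ (n - s.card) := by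
    rw [aux_main1 G H v]
    rw [← Finset.sum_fiberwise_of_maps_to
      (g := fun g : α → Finset β => Finset.univ.filter (fun a => v ∈ g a)) (t := IndS)
      (fun g hg => by
        simp only [hIndS, Finset.mem_filter, Finset.mem_univ, true_and] at hg ⊢
        intro a ha a' ha'
        exact hg.2 a a' ha ha')]
    refine Finset.sum_congr rfl ?_
    intro s hs
    simp only [hIndS, Finset.mem_filter, Finset.mem_univ, true_and] at hs
    rw [aux_fiber_eq G H v s hs,
      ← Finset.prod_univ_sum (fun a => if a ∈ s then
          Finset.univ.filter (fun T : Finset β => (∀ u ∈ T, ∀ w ∈ T, ¬ H.Adj u w) ∧ v ∈ T)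
        else
          Finset.univ.filter (fun T : Finset β => (∀ u ∈ T, ∀ w ∈ T, ¬ H.Adj u w) ∧ v ∉ T))
        (fun _ (T : Finset β) => (X : Polynomial ℝ) ^ T.card)]
    have hprod : ∀ a : α,
        (∑ T ∈ (if a ∈ s then
          Finset.univ.filter (fun T : Finset β => (∀ u ∈ T, ∀ w ∈ T, ¬ H.Adj u w) ∧ v ∈ T)
        else
          Finset.univ.filter (fun T : Finset β => (∀ u ∈ T, ∀ w ∈ T, ¬ H.Adj u w) ∧ v ∉ T)),
          (X : Polynomial ℝ) ^ T.card)
        = if a ∈ s then X * P else Q := by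
      intro a
      by_cases ha : a ∈ s
      · rw [if_pos ha, if_pos ha, ← aux_sumP H v]
      · rw [if_neg ha, if_neg ha, aux_sumQ H v]
    rw [Finset.prod_congr rfl (fun a _ => hprod a), Finset.prod_ite, Finset.prod_const,
      Finset.prod_const]
    have h1 : (Finset.univ.filter (fun a => a ∈ s)) = s := Finset.filter_univ_mem s
    have h2 : (Finset.univ.filter (fun a => ¬ a ∈ s)).card = n - s.card := by
      have h3 := Finset.card_filter_add_card_filter_not
        (s := (Finset.univ : Finset α)) (p := fun a => a ∈ s)
      rw [h1] at h3
      rw [Finset.card_univ] at h3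
      omega
    rw [h1, h2, mul_pow]
  rw [hLHS]
  -- RHS equals the same sum, grouping by cardinality
  rw [← Finset.sum_fiberwise_of_maps_to (g := fun s : Finset α => s.card)
    (t := Finset.range (n + 1))
    (fun s _ => Finset.mem_range.mpr (Nat.lt_succ_of_le (by
      simpa [hn] using Finset.card_le_univ s)))]
  refine Finset.sum_congr rfl ?_
  intro k hk
  have hco : (indepPoly G).coeff k = ((IndS.filter (fun s => s.card = k)).card : ℝ) := by
    unfold indepPoly
    rw [finset_sum_coeff]
    simp only [coeff_X_pow]
    rw [Finset.sum_boole]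
    norm_cast
    congr 1
    ext s
    simp only [Finset.mem_filter, Finset.mem_univ, true_and, hIndS]
    constructor
    · rintro ⟨h1, h2⟩; exact ⟨h1, h2.symm⟩
    · rintro ⟨h1, h2⟩; exact ⟨h1, h2.symm⟩
  calc ∑ s ∈ IndS.filter (fun s => s.card = k),
        (X : Polynomial ℝ) ^ s.card * P ^ s.card * Q ^ (n - s.card)
      = ∑ _s ∈ IndS.filter (fun s => s.card = k),
        (X : Polynomial ℝ) ^ k * P ^ k * Q ^ (n - k) := by
        refine Finset.sum_congr rfl ?_
        intro s hs
        rw [Finset.mem_filter] at hs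
        rw [hs.2]
    _ = C ((indepPoly G).coeff k) * X ^ k * P ^ k * Q ^ (n - k) := by
        rw [Finset.sum_const, hco, map_natCast, nsmul_eq_mul]
        ring
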